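/- Let α > β > 0, |X₀(s)| = √(α²cos²s + β²sin²s), and K(s) = (1/4)|sin s| the 2π-periodic kernel. Define A₁₁(s) = β²sin²s/|X₀(s)|³, A₁₂(s) = -αβ cos s sin s/|X₀(s)|³, A₂₂(s) = α²cos²s/|X₀(s)|³, and I₁ = ⟨A₁₁, K*A₁₁⟩ + ⟨A₁₂, K*A₁₂⟩, I₂ = ⟨A₂₂, K*A₂₂⟩ + ⟨A₁₂, K*A₁₂⟩, where ⟨f,g⟩ = ∫₀^{2π} f g ds and (K*f)(s) = ∫₀^{2π} K(s-t)f(t)dt. Then α² I₁ = β² I₂. -/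

import Mathlib

open Real MeasureTheory intervalIntegral Set Function

noncomputable def ell (α β s : ℝ) : ℝ := Real.sqrt (α^2 * Real.cos s^2 + β^2 * Real.sin s^2)
noncomputable def uu (α β s : ℝ) : ℝ := (ell α β s)⁻¹
noncomputable def vv (α β s : ℝ) : ℝ := ((ell α β s)^3)⁻¹
noncomputable def pp (α β s : ℝ) : ℝ := (α^2 - β^2) * (Real.sin s * Real.cos s) * vv α β s

section basic
variable {α β : ℝ} (hβ : 0 < β) (hβα : β ≤ α)

lemma q_nonneg (s : ℝ) : 0 ≤ α^2 * Real.cos s^2 + β^2 * Real.sin s^2 := by positivity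

lemma ell_sq (s : ℝ) : (ell α β s)^2 = α^2 * Real.cos s^2 + β^2 * Real.sin s^2 :=
  Real.sq_sqrt (q_nonneg s)

include hβ hβα in
lemma ell_ge (s : ℝ) : β ≤ ell α β s := by
  have h1 : β^2 ≤ α^2 * Real.cos s^2 + β^2 * Real.sin s^2 := by
    have hb2 : β^2 ≤ α^2 := by nlinarith
    have : β^2 * Real.cos s^2 ≤ α^2 * Real.cos s^2 := by nlinarith [sq_nonneg (Real.cos s)]
    nlinarith [Real.sin_sq_add_cos_sq s]
  calc β = Real.sqrt (β^2) := by rw [Real.sqrt_sq hβ.le]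
  _ ≤ _ := Real.sqrt_le_sqrt h1

include hβ hβα in
lemma ell_pos (s : ℝ) : 0 < ell α β s := lt_of_lt_of_le hβ (ell_ge hβ hβα s)

lemma ell_per (s : ℝ) : ell α β (s + π) = ell α β s := by
  simp [ell, Real.cos_add_pi, Real.sin_add_pi, neg_pow]

lemma ell_per2 (s : ℝ) : ell α β (s + 2*π) = ell α β s := by
  have : s + 2*π = (s + π) + π := by ring
  rw [this, ell_per, ell_per]

lemma ell_cont : Continuous (fun s => ell α β s) := by
  apply Real.continuous_sqrt.comp; continuity

include hβ hβα in
lemma uu_cont : Continuous (fun s => uu α β s) :=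
  (ell_cont).inv₀ (fun s => (ell_pos hβ hβα s).ne')

include hβ hβα in
lemma vv_cont : Continuous (fun s => vv α β s) :=
  ((ell_cont).pow 3).inv₀ (fun s => by have := ell_pos hβ hβα s; exact pow_ne_zero 3 this.ne')

include hβ hβα in
lemma pp_cont : Continuous (fun s => pp α β s) := by
  unfold pp
  exact (continuous_const.mul (Real.continuous_sin.mul Real.continuous_cos)).mul (vv_cont hβ hβα)

lemma uu_per (s : ℝ) : uu α β (s + π) = uu α β s := by rw [uu, ell_per, uu]
lemma uu_per2 (s : ℝ) : uu α β (s + 2*π) = uu α β s := by rw [uu, ell_per2, uu]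
lemma vv_per2 (s : ℝ) : vv α β (s + 2*π) = vv α β s := by rw [vv, ell_per2, vv]
lemma pp_per2 (s : ℝ) : pp α β (s + 2*π) = pp α β s := by
  rw [pp, Real.sin_add_two_pi, Real.cos_add_two_pi, vv_per2, pp]

include hβ hβα in
lemma hasDerivAt_ell (s : ℝ) :
    HasDerivAt (ell α β) ((β^2 - α^2) * (Real.sin s * Real.cos s) / ell α β s) s := by
  have hq : HasDerivAt (fun s => α^2 * Real.cos s^2 + β^2 * Real.sin s^2)
      (2 * (β^2 - α^2) * (Real.sin s * Real.cos s)) s := by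
    have h1 := ((Real.hasDerivAt_cos s).pow 2).const_mul (α^2)
    have h2 := ((Real.hasDerivAt_sin s).pow 2).const_mul (β^2)
    refine (h1.add h2).congr_deriv ?_; ring
  have := hq.sqrt (by nlinarith [ell_pos hβ hβα s, ell_sq (α := α) (β := β) s])
  refine (this).congr_deriv ?_
  rw [ell]; ring

include hβ hβα in
lemma hasDerivAt_uu (s : ℝ) : HasDerivAt (uu α β) (pp α β s) s := by
  have h := (hasDerivAt_ell hβ hβα s).inv (ell_pos hβ hβα s).ne'
  refine (h).congr_deriv ?_
  have he := (ell_pos hβ hβα s).ne'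
  rw [pp, vv]
  field_simp
  ring

end basic


lemma myFubini (F : ℝ → ℝ → ℝ) (hF : Continuous (Function.uncurry F))
    {a b c d : ℝ} (hab : a ≤ b) (hcd : c ≤ d) :
    (∫ s in a..b, ∫ t in c..d, F s t) = ∫ t in c..d, ∫ s in a..b, F s t := by
  simp_rw [intervalIntegral.integral_of_le hab, intervalIntegral.integral_of_le hcd]
  apply MeasureTheory.integral_integral_swap
  rw [Measure.prod_restrict]
  have h1 : IntegrableOn (Function.uncurry F) (Icc a b ×ˢ Icc c d) (volume.prod volume) := by
    rw [← MeasureTheory.Measure.volume_eq_prod]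
    exact hF.continuousOn.integrableOn_compact (isCompact_Icc.prod isCompact_Icc)
  exact h1.mono_set (Set.prod_mono Set.Ioc_subset_Icc_self Set.Ioc_subset_Icc_self)

lemma fold (f : ℝ → ℝ) (hf : Continuous f) (hper : Function.Periodic f (2*π)) (s : ℝ) :
    (∫ t in (0:ℝ)..(2*π), (1/4) * |Real.sin (s - t)| * f t)
  = ∫ τ in (0:ℝ)..π, (1/4) * Real.sin τ * (f (s - τ) + f (s + τ)) := by
  set h : ℝ → ℝ := fun τ => (1/4) * |Real.sin τ| * f (s - τ) with hh
  have hcont : Continuous h := by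
    apply ((continuous_const.mul (Real.continuous_sin.abs)).mul _)
    exact hf.comp (continuous_const.sub continuous_id)
  have hper' : Function.Periodic h (2*π) := by
    intro x
    have h1 : |Real.sin (x + 2*π)| = |Real.sin x| := by rw [Real.sin_add_two_pi]
    have h2 : f (s - (x + 2*π)) = f (s - x) := by
      have := hper (s - x - 2*π)
      simp only [sub_add_cancel] at this
      rw [show s - (x + 2*π) = s - x - 2*π by ring, this]
    simp only [hh, h1, h2]
  have step1 : (∫ t in (0:ℝ)..(2*π), (1/4) * |Real.sin (s - t)| * f t)
      = ∫ t in (0:ℝ)..(2*π), h (s - t) := by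
    apply intervalIntegral.integral_congr
    intro t _
    simp only [hh, sub_sub_cancel]
  rw [step1, intervalIntegral.integral_comp_sub_left h s]
  have step2 : (∫ x in s - 2*π..s - 0, h x) = ∫ x in (-π)..(-π + 2*π), h x := by
    have := hper'.intervalIntegral_add_eq (s - 2*π) (-π)
    rw [show s - 2*π + 2*π = s - 0 by ring] at this
    exact this
  rw [step2]
  have step3 : (∫ x in (-π)..(-π + 2*π), h x) = (∫ x in (-π)..(0:ℝ), h x) + ∫ x in (0:ℝ)..π, h x := by
    rw [show -π + 2*π = π by ring]
    exact (intervalIntegral.integral_add_adjacent_intervals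
      (hcont.intervalIntegrable _ _) (hcont.intervalIntegrable _ _)).symm
  rw [step3]
  have step4 : (∫ x in (-π)..(0:ℝ), h x) = ∫ τ in (0:ℝ)..π, (1/4) * |Real.sin τ| * f (s + τ) := by
    have hcn := intervalIntegral.integral_comp_neg (a := (0:ℝ)) (b := π) h
    rw [neg_zero] at hcn
    rw [← hcn]
    apply intervalIntegral.integral_congr
    intro τ _
    simp only [hh, Real.sin_neg, abs_neg, sub_neg_eq_add]
  rw [step4]
  have habs : ∀ τ ∈ Set.uIcc (0:ℝ) π, |Real.sin τ| = Real.sin τ := by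
    intro τ hτ
    rw [Set.uIcc_of_le Real.pi_nonneg] at hτ
    exact abs_of_nonneg (Real.sin_nonneg_of_nonneg_of_le_pi hτ.1 hτ.2)
  have e1 : (∫ τ in (0:ℝ)..π, (1/4) * |Real.sin τ| * f (s + τ))
      = ∫ τ in (0:ℝ)..π, (1/4) * Real.sin τ * f (s + τ) :=
    intervalIntegral.integral_congr (fun τ hτ => by rw [habs τ hτ])
  have e2 : (∫ x in (0:ℝ)..π, h x) = ∫ τ in (0:ℝ)..π, (1/4) * Real.sin τ * f (s - τ) :=
    intervalIntegral.integral_congr (fun τ hτ => by simp only [hh]; rw [habs τ hτ])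
  have hi1 : IntervalIntegrable (fun τ => (1/4) * Real.sin τ * f (s - τ)) volume 0 π :=
    ((continuous_const.mul Real.continuous_sin).mul
      (hf.comp (continuous_const.sub continuous_id))).intervalIntegrable _ _
  have hi2 : IntervalIntegrable (fun τ => (1/4) * Real.sin τ * f (s + τ)) volume 0 π :=
    ((continuous_const.mul Real.continuous_sin).mul
      (hf.comp (continuous_const.add continuous_id))).intervalIntegrable _ _
  have hsplit : (∫ τ in (0:ℝ)..π, (1/4) * Real.sin τ * (f (s - τ) + f (s + τ)))
      = (∫ τ in (0:ℝ)..π, (1/4) * Real.sin τ * f (s - τ))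
        + ∫ τ in (0:ℝ)..π, (1/4) * Real.sin τ * f (s + τ) := by
    rw [← intervalIntegral.integral_add hi1 hi2]
    apply intervalIntegral.integral_congr
    intro τ _; ring
  rw [e1, e2, hsplit]
  ring
section deriv2
variable {α β : ℝ} (hβ : 0 < β) (hβα : β ≤ α)

include hβ hβα in
lemma hasDerivAt_sin_uu (σ : ℝ) :
    HasDerivAt (fun σ => Real.sin σ * uu α β σ) (α^2 * Real.cos σ * vv α β σ) σ := by
  have h := (Real.hasDerivAt_sin σ).mul (hasDerivAt_uu hβ hβα σ)
  refine (h).congr_deriv ?_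
  have he := (ell_pos hβ hβα σ).ne'
  have hsq := ell_sq (α := α) (β := β) σ
  have hp := Real.sin_sq_add_cos_sq σ
  rw [pp, vv, uu]
  field_simp
  linear_combination (Real.cos σ) * hsq + (α^2 * Real.cos σ) * hp

include hβ hβα in
lemma hasDerivAt_cos_uu (σ : ℝ) :
    HasDerivAt (fun σ => Real.cos σ * uu α β σ) (-(β^2) * Real.sin σ * vv α β σ) σ := by
  have h := (Real.hasDerivAt_cos σ).mul (hasDerivAt_uu hβ hβα σ)
  refine (h).congr_deriv ?_
  have he := (ell_pos hβ hβα σ).ne'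
  have hsq := ell_sq (α := α) (β := β) σ
  have hp := Real.sin_sq_add_cos_sq σ
  rw [pp, vv, uu]
  field_simp
  linear_combination (-Real.sin σ) * hsq + (-(β^2) * Real.sin σ) * hp

end deriv2
section convvv
variable {α β : ℝ} (hβ : 0 < β) (hβα : β ≤ α)

include hβ hβα in
lemma conv_vv (s : ℝ) :
    (∫ τ in (0:ℝ)..π, (1/4) * Real.sin τ * (vv α β (s - τ) + vv α β (s + τ)))
      = ell α β s / (α^2 * β^2) := by
  have hα : (0:ℝ) < α := lt_of_lt_of_le hβ hβα
  set P : ℝ → ℝ := fun σ =>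
    Real.sin s * (Real.sin σ * uu α β σ)/α^2 + Real.cos s * (Real.cos σ * uu α β σ)/β^2 with hP
  have hPd : ∀ σ, HasDerivAt P (Real.sin (s - σ) * vv α β σ) σ := by
    intro σ
    have h1 := ((hasDerivAt_sin_uu hβ hβα σ).const_mul (Real.sin s)).div_const (α^2)
    have h2 := ((hasDerivAt_cos_uu hβ hβα σ).const_mul (Real.cos s)).div_const (β^2)
    have h := h1.add h2
    refine (h).congr_deriv ?_
    rw [Real.sin_sub]
    field_simp
    ring
  have hPpi : ∀ σ, P (σ + π) = -P σ := by
    intro σ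
    simp only [hP, Real.sin_add_pi, Real.cos_add_pi, uu_per]
    ring
  set A : ℝ → ℝ := fun τ => -(1/4) * (P (s - τ) + P (s + τ)) with hA
  have hAd : ∀ τ ∈ Set.uIcc (0:ℝ) π, HasDerivAt A
      ((1/4) * Real.sin τ * (vv α β (s - τ) + vv α β (s + τ))) τ := by
    intro τ _
    have h1 : HasDerivAt (fun τ => P (s - τ)) (Real.sin (s - (s - τ)) * vv α β (s - τ) * (-1)) τ :=
      (hPd (s - τ)).comp τ ((hasDerivAt_id τ).const_sub s)
    have h2 : HasDerivAt (fun τ => P (s + τ)) (Real.sin (s - (s + τ)) * vv α β (s + τ) * 1) τ :=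
      (hPd (s + τ)).comp τ ((hasDerivAt_id τ).const_add s)
    have h := ((h1.add h2).const_mul (-(1/4)))
    refine (h).congr_deriv ?_
    rw [show s - (s - τ) = τ by ring, show s - (s + τ) = -τ by ring, Real.sin_neg]
    ring
  have hcont : Continuous fun τ => (1/4) * Real.sin τ * (vv α β (s - τ) + vv α β (s + τ)) := by
    apply (continuous_const.mul Real.continuous_sin).mul
    exact ((vv_cont hβ hβα).comp (continuous_const.sub continuous_id)).add
      ((vv_cont hβ hβα).comp (continuous_const.add continuous_id))
  rw [intervalIntegral.integral_eq_sub_of_hasDerivAt hAd (hcont.intervalIntegrable _ _)]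
  have hsmp : P (s - π) = -P s := by
    have := hPpi (s - π)
    rw [show s - π + π = s by ring] at this
    linarith
  have hval : A π - A 0 = P s := by
    simp only [hA, sub_zero, add_zero, hsmp, hPpi s]
    ring
  rw [hval]
  have hsq := ell_sq (α := α) (β := β) s
  have he := (ell_pos hβ hβα s).ne'
  have h1 : P s = (β^2 * Real.sin s^2 + α^2 * Real.cos s^2) / (α^2 * β^2 * ell α β s) := by
    simp only [hP, uu]
    field_simp
  have h2 : β^2 * Real.sin s^2 + α^2 * Real.cos s^2 = ell α β s ^ 2 := by rw [hsq]; ring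
  rw [h1, h2, pow_two]
  field_simp

end convvv
section shift
-- periodic shift lemma
lemma shift2pi (F : ℝ → ℝ) (hper : Function.Periodic F (2*π)) (τ : ℝ) :
    (∫ s in (0:ℝ)..(2*π), F (s + τ)) = ∫ s in (0:ℝ)..(2*π), F s := by
  rw [intervalIntegral.integral_comp_add_right F τ]
  have h := hper.intervalIntegral_add_eq (0 + τ) 0
  rw [show (0:ℝ) + τ + 2*π = 2*π + τ by ring, zero_add] at h
  rw [show (0:ℝ) + 2*π = 2*π by ring] at h
  rw [show (0:ℝ) + τ = τ by ring]
  exact h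

lemma shift2pi_sub (F : ℝ → ℝ) (hper : Function.Periodic F (2*π)) (τ : ℝ) :
    (∫ s in (0:ℝ)..(2*π), F (s - τ)) = ∫ s in (0:ℝ)..(2*π), F s := by
  have := shift2pi F hper (-τ)
  simp only [← sub_eq_add_neg] at this
  exact this
end shift

section ibp
variable {α β : ℝ} (hβ : 0 < β) (hβα : β ≤ α)

include hβ hβα in
lemma ibp_zero (τ : ℝ) :
    (∫ s in (0:ℝ)..(2*π), (pp α β s * uu α β (s - τ) + uu α β s * pp α β (s - τ))) = 0 := by
  have hd : ∀ s ∈ Set.uIcc (0:ℝ) (2*π), HasDerivAt (fun s => uu α β s * uu α β (s - τ))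
      (pp α β s * uu α β (s - τ) + uu α β s * pp α β (s - τ)) s := by
    intro s _
    have h1 : HasDerivAt (fun s : ℝ => uu α β (s - τ)) (pp α β (s - τ) * 1) s :=
      by have := (hasDerivAt_uu hβ hβα (s - τ)).comp s ((hasDerivAt_id s).sub_const τ); exact this
    have h := (hasDerivAt_uu hβ hβα s).mul h1
    refine (h).congr_deriv ?_
    ring
  have hint : IntervalIntegrable
      (fun s => pp α β s * uu α β (s - τ) + uu α β s * pp α β (s - τ)) volume 0 (2*π) := by
    apply Continuous.intervalIntegrable
    exact ((pp_cont hβ hβα).mul ((uu_cont hβ hβα).comp (continuous_id.sub continuous_const))).add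
      ((uu_cont hβ hβα).mul ((pp_cont hβ hβα).comp (continuous_id.sub continuous_const)))
  rw [intervalIntegral.integral_eq_sub_of_hasDerivAt hd hint]
  have e1 : uu α β (2*π) = uu α β 0 := by
    have := uu_per2 (α := α) (β := β) 0; rw [zero_add] at this; exact this
  have e2 : uu α β (2*π - τ) = uu α β (0 - τ) := by
    have := uu_per2 (α := α) (β := β) (-τ)
    rw [show -τ + 2*π = 2*π - τ by ring] at this
    rw [this]; norm_num
  rw [e1, e2]
  ring

-- the two shift identities used for inner s-integrals
include hβ hβα in
lemma pu_flip (τ : ℝ) :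
    (∫ s in (0:ℝ)..(2*π), pp α β s * uu α β (s + τ))
      = -∫ s in (0:ℝ)..(2*π), pp α β s * uu α β (s - τ) := by
  have hshift : (∫ s in (0:ℝ)..(2*π), pp α β s * uu α β (s + τ))
      = ∫ s in (0:ℝ)..(2*π), pp α β (s - τ) * uu α β s := by
    have hper : Function.Periodic (fun σ => pp α β (σ - τ) * uu α β σ) (2*π) := by
      intro x
      simp only [show ∀ y:ℝ, y + 2*π - τ = (y - τ) + 2*π from fun y => by ring, pp_per2, uu_per2]
    have h := shift2pi (fun σ => pp α β (σ - τ) * uu α β σ) hper τ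
    simp only [add_sub_cancel_right] at h
    exact h
  rw [hshift]
  have h0 := ibp_zero hβ hβα τ
  have hi1 : IntervalIntegrable (fun s => pp α β s * uu α β (s - τ)) volume 0 (2*π) :=
    (((pp_cont hβ hβα)).mul ((uu_cont hβ hβα).comp
      (continuous_id.sub continuous_const))).intervalIntegrable _ _
  have hi2 : IntervalIntegrable (fun s => uu α β s * pp α β (s - τ)) volume 0 (2*π) :=
    (((uu_cont hβ hβα)).mul ((pp_cont hβ hβα).comp
      (continuous_id.sub continuous_const))).intervalIntegrable _ _
  rw [intervalIntegral.integral_add hi1 hi2] at h0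
  have : (∫ s in (0:ℝ)..(2*π), pp α β (s - τ) * uu α β s)
      = ∫ s in (0:ℝ)..(2*π), uu α β s * pp α β (s - τ) := by
    apply intervalIntegral.integral_congr; intro s _; ring
  rw [this]
  linarith

include hβ hβα in
omit hβ hβα in
lemma uu_flip (τ : ℝ) :
    (∫ s in (0:ℝ)..(2*π), uu α β s * uu α β (s + τ))
      = ∫ s in (0:ℝ)..(2*π), uu α β s * uu α β (s - τ) := by
  have hper : Function.Periodic (fun σ => uu α β (σ - τ) * uu α β σ) (2*π) := by
    intro x
    simp only [show ∀ y:ℝ, y + 2*π - τ = (y - τ) + 2*π from fun y => by ring, uu_per2]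
  have h := shift2pi (fun σ => uu α β (σ - τ) * uu α β σ) hper τ
  simp only [add_sub_cancel_right] at h
  rw [h]
  apply intervalIntegral.integral_congr; intro s _; ring

end ibp
section innerIbp
variable {α β : ℝ} (hβ : 0 < β) (hβα : β ≤ α)

include hβ hβα in
lemma inner_ibp (s : ℝ) :
    (∫ τ in (0:ℝ)..π, (1/4) * Real.sin τ * (pp α β (s - τ) + pp α β (s + τ)))
      = ∫ τ in (0:ℝ)..π, (1/4) * Real.cos τ * (uu α β (s - τ) - uu α β (s + τ)) := by
  have hcu := uu_cont hβ hβα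
  have hcp := pp_cont hβ hβα
  have hi1 : IntervalIntegrable (fun τ => (1/4) * Real.sin τ * (pp α β (s - τ) + pp α β (s + τ)))
      volume 0 π := by
    apply Continuous.intervalIntegrable
    exact (continuous_const.mul Real.continuous_sin).mul
      ((hcp.comp (continuous_const.sub continuous_id)).add
        (hcp.comp (continuous_const.add continuous_id)))
  have hi2 : IntervalIntegrable (fun τ => (1/4) * Real.cos τ * (uu α β (s - τ) - uu α β (s + τ)))
      volume 0 π := by
    apply Continuous.intervalIntegrable
    exact (continuous_const.mul Real.continuous_cos).mul
      ((hcu.comp (continuous_const.sub continuous_id)).sub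
        (hcu.comp (continuous_const.add continuous_id)))
  have key : (∫ τ in (0:ℝ)..π,
      ((1/4) * Real.sin τ * (pp α β (s - τ) + pp α β (s + τ))
        - (1/4) * Real.cos τ * (uu α β (s - τ) - uu α β (s + τ)))) = 0 := by
    set w : ℝ → ℝ := fun τ => -(1/4) * Real.sin τ * (uu α β (s - τ) - uu α β (s + τ)) with hw
    have hd : ∀ τ ∈ Set.uIcc (0:ℝ) π, HasDerivAt w
        ((1/4) * Real.sin τ * (pp α β (s - τ) + pp α β (s + τ))
          - (1/4) * Real.cos τ * (uu α β (s - τ) - uu α β (s + τ))) τ := by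
      intro τ _
      have h1 : HasDerivAt (fun τ : ℝ => uu α β (s - τ)) (pp α β (s - τ) * (-1)) τ :=
        (hasDerivAt_uu hβ hβα (s - τ)).comp τ ((hasDerivAt_id τ).const_sub s)
      have h2 : HasDerivAt (fun τ : ℝ => uu α β (s + τ)) (pp α β (s + τ) * 1) τ :=
        (hasDerivAt_uu hβ hβα (s + τ)).comp τ ((hasDerivAt_id τ).const_add s)
      have h3 := ((Real.hasDerivAt_sin τ).mul (h1.sub h2)).const_mul (-(1/4) : ℝ)
      have heq : w = fun y => -(1/4) * (Real.sin y * (uu α β (s - y) - uu α β (s + y))) :=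
        funext fun y => by simp only [hw]; ring
      rw [heq]
      refine (h3).congr_deriv ?_
      simp only [Pi.sub_apply]; ring
    rw [intervalIntegral.integral_eq_sub_of_hasDerivAt hd (hi1.sub hi2)]
    simp only [hw, Real.sin_zero, Real.sin_pi]
    ring
  rw [intervalIntegral.integral_sub hi1 hi2] at key
  linarith

end innerIbp
section master
variable {α β : ℝ} (hβ : 0 < β) (hβα : β ≤ α)

include hβ hβα in
lemma Buu_sub_Bpp :
    ((∫ s in (0:ℝ)..(2*π), uu α β s * ∫ t in (0:ℝ)..(2*π), (1/4) * |Real.sin (s - t)| * uu α β t)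
      - ∫ s in (0:ℝ)..(2*π), pp α β s * ∫ t in (0:ℝ)..(2*π), (1/4) * |Real.sin (s - t)| * pp α β t)
    = ∫ s in (0:ℝ)..(2*π), (uu α β s)^2 := by
  have hπ : (0:ℝ) ≤ π := Real.pi_nonneg
  have h2π : (0:ℝ) ≤ 2*π := by linarith
  have hcu := uu_cont hβ hβα
  have hcp := pp_cont hβ hβα
  have hperu : Function.Periodic (uu α β) (2*π) := fun x => uu_per2 x
  have hperp : Function.Periodic (pp α β) (2*π) := fun x => pp_per2 x
  -- continuity of shifted compositions (two-variable)
  have hcu1 : Continuous fun q : ℝ × ℝ => uu α β (q.1 - q.2) :=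
    hcu.comp (continuous_fst.sub continuous_snd)
  have hcu2 : Continuous fun q : ℝ × ℝ => uu α β (q.1 + q.2) :=
    hcu.comp (continuous_fst.add continuous_snd)
  have hcp1 : Continuous fun q : ℝ × ℝ => pp α β (q.1 - q.2) :=
    hcp.comp (continuous_fst.sub continuous_snd)
  have hiuuτ : ∀ τ : ℝ, IntervalIntegrable (fun s => uu α β s * uu α β (s - τ)) volume 0 (2*π) :=
    fun τ => (hcu.mul (hcu.comp (continuous_id.sub continuous_const))).intervalIntegrable _ _
  have hiuuτ' : ∀ τ : ℝ, IntervalIntegrable (fun s => uu α β s * uu α β (s + τ)) volume 0 (2*π) :=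
    fun τ => (hcu.mul (hcu.comp (continuous_id.add continuous_const))).intervalIntegrable _ _
  have hipuτ : ∀ τ : ℝ, IntervalIntegrable (fun s => pp α β s * uu α β (s - τ)) volume 0 (2*π) :=
    fun τ => (hcp.mul (hcu.comp (continuous_id.sub continuous_const))).intervalIntegrable _ _
  have hipuτ' : ∀ τ : ℝ, IntervalIntegrable (fun s => pp α β s * uu α β (s + τ)) volume 0 (2*π) :=
    fun τ => (hcp.mul (hcu.comp (continuous_id.add continuous_const))).intervalIntegrable _ _
  -- Step 1 : Buu in folded double-integral form
  have hBuu : (∫ s in (0:ℝ)..(2*π), uu α β s * ∫ t in (0:ℝ)..(2*π),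
        (1/4) * |Real.sin (s - t)| * uu α β t)
      = ∫ τ in (0:ℝ)..π, (1/2) * Real.sin τ * ∫ s in (0:ℝ)..(2*π), uu α β s * uu α β (s - τ) := by
    have step1 : (∫ s in (0:ℝ)..(2*π), uu α β s * ∫ t in (0:ℝ)..(2*π),
          (1/4) * |Real.sin (s - t)| * uu α β t)
        = ∫ s in (0:ℝ)..(2*π), ∫ τ in (0:ℝ)..π,
            uu α β s * ((1/4) * Real.sin τ * (uu α β (s - τ) + uu α β (s + τ))) := by
      apply intervalIntegral.integral_congr
      intro s _
      simp only []
      rw [fold (uu α β) hcu hperu s, ← intervalIntegral.integral_const_mul]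
    have hF : Continuous (Function.uncurry fun s τ =>
        uu α β s * ((1/4) * Real.sin τ * (uu α β (s - τ) + uu α β (s + τ)))) :=
      (hcu.comp continuous_fst).mul
        ((continuous_const.mul (Real.continuous_sin.comp continuous_snd)).mul (hcu1.add hcu2))
    rw [step1, myFubini _ hF h2π hπ]
    apply intervalIntegral.integral_congr
    intro τ _
    simp only []
    have e1 : (∫ s in (0:ℝ)..(2*π),
          uu α β s * ((1/4) * Real.sin τ * (uu α β (s - τ) + uu α β (s + τ))))
        = (1/4) * Real.sin τ * ∫ s in (0:ℝ)..(2*π),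
            (uu α β s * uu α β (s - τ) + uu α β s * uu α β (s + τ)) := by
      rw [← intervalIntegral.integral_const_mul]
      apply intervalIntegral.integral_congr
      intro s _; ring
    rw [e1, intervalIntegral.integral_add (hiuuτ τ) (hiuuτ' τ), uu_flip (α := α) (β := β) τ]
    ring
  -- Step 2 : Bpp in folded, integrated-by-parts double-integral form
  have hBpp : (∫ s in (0:ℝ)..(2*π), pp α β s * ∫ t in (0:ℝ)..(2*π),
        (1/4) * |Real.sin (s - t)| * pp α β t)
      = ∫ τ in (0:ℝ)..π, (1/2) * Real.cos τ * ∫ s in (0:ℝ)..(2*π), pp α β s * uu α β (s - τ) := by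
    have step1 : (∫ s in (0:ℝ)..(2*π), pp α β s * ∫ t in (0:ℝ)..(2*π),
          (1/4) * |Real.sin (s - t)| * pp α β t)
        = ∫ s in (0:ℝ)..(2*π), ∫ τ in (0:ℝ)..π,
            pp α β s * ((1/4) * Real.cos τ * (uu α β (s - τ) - uu α β (s + τ))) := by
      apply intervalIntegral.integral_congr
      intro s _
      simp only []
      rw [fold (pp α β) hcp hperp s, inner_ibp hβ hβα s, ← intervalIntegral.integral_const_mul]
    have hF : Continuous (Function.uncurry fun s τ =>
        pp α β s * ((1/4) * Real.cos τ * (uu α β (s - τ) - uu α β (s + τ)))) :=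
      (hcp.comp continuous_fst).mul
        ((continuous_const.mul (Real.continuous_cos.comp continuous_snd)).mul (hcu1.sub hcu2))
    rw [step1, myFubini _ hF h2π hπ]
    apply intervalIntegral.integral_congr
    intro τ _
    simp only []
    have e1 : (∫ s in (0:ℝ)..(2*π),
          pp α β s * ((1/4) * Real.cos τ * (uu α β (s - τ) - uu α β (s + τ))))
        = (1/4) * Real.cos τ * ∫ s in (0:ℝ)..(2*π),
            (pp α β s * uu α β (s - τ) - pp α β s * uu α β (s + τ)) := by
      rw [← intervalIntegral.integral_const_mul]
      apply intervalIntegral.integral_congr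
      intro s _; ring
    rw [e1, intervalIntegral.integral_sub (hipuτ τ) (hipuτ' τ), pu_flip hβ hβα τ]
    ring
  rw [hBuu, hBpp]
  -- continuity of the parametric integrals
  have hGcont : Continuous fun τ => ∫ s in (0:ℝ)..(2*π), uu α β s * uu α β (s - τ) := by
    apply intervalIntegral.continuous_parametric_intervalIntegral_of_continuous'
    exact (hcu.comp continuous_snd).mul (hcu.comp (continuous_snd.sub continuous_fst))
  have hgcont : Continuous fun τ => ∫ s in (0:ℝ)..(2*π), pp α β s * uu α β (s - τ) := by
    apply intervalIntegral.continuous_parametric_intervalIntegral_of_continuous'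
    exact (hcp.comp continuous_snd).mul (hcu.comp (continuous_snd.sub continuous_fst))
  have hiG : IntervalIntegrable (fun τ => (1/2) * Real.sin τ *
      ∫ s in (0:ℝ)..(2*π), uu α β s * uu α β (s - τ)) volume 0 π :=
    ((continuous_const.mul Real.continuous_sin).mul hGcont).intervalIntegrable _ _
  have hig : IntervalIntegrable (fun τ => (1/2) * Real.cos τ *
      ∫ s in (0:ℝ)..(2*π), pp α β s * uu α β (s - τ)) volume 0 π :=
    ((continuous_const.mul Real.continuous_cos).mul hgcont).intervalIntegrable _ _
  rw [← intervalIntegral.integral_sub hiG hig]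
  -- rewrite each τ-slice as a single s-integral, shifted
  have hslice : ∀ τ ∈ Set.uIcc (0:ℝ) π,
      ((1/2) * Real.sin τ * ∫ s in (0:ℝ)..(2*π), uu α β s * uu α β (s - τ))
        - (1/2) * Real.cos τ * (∫ s in (0:ℝ)..(2*π), pp α β s * uu α β (s - τ))
      = ∫ σ in (0:ℝ)..(2*π),
          (1/2) * uu α β σ * (Real.sin τ * uu α β (σ + τ) - Real.cos τ * pp α β (σ + τ)) := by
    intro τ _
    have hper : Function.Periodic (fun σ =>
        (1/2) * uu α β σ * (Real.sin τ * uu α β (σ + τ) - Real.cos τ * pp α β (σ + τ))) (2*π) := by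
      intro x
      simp only [show ∀ y:ℝ, y + 2*π + τ = (y + τ) + 2*π from fun y => by ring,
        uu_per2, pp_per2]
    have h := shift2pi_sub _ hper τ
    rw [← h]
    have e2 : (∫ s in (0:ℝ)..(2*π),
          (1/2) * uu α β (s - τ) * (Real.sin τ * uu α β (s - τ + τ) - Real.cos τ * pp α β (s - τ + τ)))
        = ∫ s in (0:ℝ)..(2*π),
            ((1/2) * Real.sin τ * (uu α β s * uu α β (s - τ))
              - (1/2) * Real.cos τ * (pp α β s * uu α β (s - τ))) := by
      apply intervalIntegral.integral_congr
      intro s _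
      simp only []
      rw [sub_add_cancel]
      ring_nf
    have h1 : IntervalIntegrable (fun s => (1/2) * Real.sin τ * (uu α β s * uu α β (s - τ)))
        volume 0 (2*π) := (hiuuτ τ).const_mul _
    have h2 : IntervalIntegrable (fun s => (1/2) * Real.cos τ * (pp α β s * uu α β (s - τ)))
        volume 0 (2*π) := (hipuτ τ).const_mul _
    rw [e2, intervalIntegral.integral_sub h1 h2,
      intervalIntegral.integral_const_mul, intervalIntegral.integral_const_mul]
  rw [intervalIntegral.integral_congr hslice]
  have hF2 : Continuous (Function.uncurry fun τ σ =>
      (1/2) * uu α β σ * (Real.sin τ * uu α β (σ + τ) - Real.cos τ * pp α β (σ + τ))) := by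
    apply (continuous_const.mul (hcu.comp continuous_snd)).mul
    exact ((Real.continuous_sin.comp continuous_fst).mul
        (hcu.comp (continuous_snd.add continuous_fst))).sub
      ((Real.continuous_cos.comp continuous_fst).mul
        (hcp.comp (continuous_snd.add continuous_fst)))
  rw [myFubini _ hF2 hπ h2π]
  have hinner : ∀ σ ∈ Set.uIcc (0:ℝ) (2*π),
      (∫ τ in (0:ℝ)..π,
        (1/2) * uu α β σ * (Real.sin τ * uu α β (σ + τ) - Real.cos τ * pp α β (σ + τ)))
      = (uu α β σ)^2 := by
    intro σ _
    set c : ℝ → ℝ := fun τ => (1/2) * uu α β σ * (-Real.cos τ * uu α β (σ + τ)) with hc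
    have hd : ∀ τ ∈ Set.uIcc (0:ℝ) π, HasDerivAt c
        ((1/2) * uu α β σ * (Real.sin τ * uu α β (σ + τ) - Real.cos τ * pp α β (σ + τ))) τ := by
      intro τ _
      have hc1 : HasDerivAt (fun τ : ℝ => uu α β (σ + τ)) (pp α β (σ + τ) * 1) τ :=
        (hasDerivAt_uu hβ hβα (σ + τ)).comp τ ((hasDerivAt_id τ).const_add σ)
      have h := (((Real.hasDerivAt_cos τ).neg).mul hc1).const_mul ((1/2) * uu α β σ)
      have heq : c = fun τ => (1/2) * uu α β σ * (-Real.cos τ * uu α β (σ + τ)) := hc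
      rw [heq]
      refine (h).congr_deriv ?_
      simp only [Pi.neg_apply]; ring
    have hint : IntervalIntegrable (fun τ =>
        (1/2) * uu α β σ * (Real.sin τ * uu α β (σ + τ) - Real.cos τ * pp α β (σ + τ)))
        volume 0 π := by
      apply Continuous.intervalIntegrable
      apply continuous_const.mul
      exact (Real.continuous_sin.mul (hcu.comp (continuous_const.add continuous_id))).sub
        (Real.continuous_cos.mul (hcp.comp (continuous_const.add continuous_id)))
    rw [intervalIntegral.integral_eq_sub_of_hasDerivAt hd hint]
    simp only [hc, Real.cos_pi, Real.cos_zero, uu_per]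
    ring_nf
  rw [intervalIntegral.integral_congr hinner]
end master
noncomputable def convK (f : ℝ → ℝ) (s : ℝ) : ℝ :=
  ∫ t in (0:ℝ)..(2*π), (1/4) * |Real.sin (s - t)| * f t

noncomputable def brk (f g : ℝ → ℝ) : ℝ :=
  ∫ s in (0:ℝ)..(2*π), f s * convK g s

lemma convK_cont {f : ℝ → ℝ} (hf : Continuous f) : Continuous (convK f) := by
  apply intervalIntegral.continuous_parametric_intervalIntegral_of_continuous'
    (f := fun s t => (1/4) * |Real.sin (s - t)| * f t)
  exact (continuous_const.mul
    ((Real.continuous_sin.comp (continuous_fst.sub continuous_snd)).abs)).mul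
    (hf.comp continuous_snd)

lemma kernel_ii {f : ℝ → ℝ} (hf : Continuous f) (s : ℝ) :
    IntervalIntegrable (fun t => (1/4) * |Real.sin (s - t)| * f t) volume 0 (2*π) := by
  apply Continuous.intervalIntegrable
  exact (continuous_const.mul
    ((Real.continuous_sin.comp (continuous_const.sub continuous_id)).abs)).mul hf

lemma convK_comb {f g : ℝ → ℝ} (hf : Continuous f) (hg : Continuous g) (a b s : ℝ) :
    convK (fun t => a * f t + b * g t) s = a * convK f s + b * convK g s := by
  unfold convK
  rw [← intervalIntegral.integral_const_mul, ← intervalIntegral.integral_const_mul,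
    ← intervalIntegral.integral_add ((kernel_ii hf s).const_mul a) ((kernel_ii hg s).const_mul b)]
  apply intervalIntegral.integral_congr
  intro t _
  simp only []
  ring

lemma brk_comb {f g : ℝ → ℝ} (hf : Continuous f) (hg : Continuous g) (a b : ℝ) :
    brk (fun t => a * f t + b * g t) (fun t => a * f t + b * g t)
      = a^2 * brk f f + a*b * brk f g + a*b * brk g f + b^2 * brk g g := by
  unfold brk
  have h1 : (∫ s in (0:ℝ)..(2*π),
      (fun t => a * f t + b * g t) s * convK (fun t => a * f t + b * g t) s)
      = ∫ s in (0:ℝ)..(2*π),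
        (a^2 * (f s * convK f s) + a*b * (f s * convK g s)
          + (a*b * (g s * convK f s) + b^2 * (g s * convK g s))) := by
    apply intervalIntegral.integral_congr
    intro s _
    simp only []
    rw [convK_comb hf hg]
    ring
  rw [h1]
  have i1 : IntervalIntegrable (fun s => a^2 * (f s * convK f s)) volume 0 (2*π) :=
    ((hf.mul (convK_cont hf)).intervalIntegrable _ _).const_mul _
  have i2 : IntervalIntegrable (fun s => a*b * (f s * convK g s)) volume 0 (2*π) :=
    ((hf.mul (convK_cont hg)).intervalIntegrable _ _).const_mul _
  have i3 : IntervalIntegrable (fun s => a*b * (g s * convK f s)) volume 0 (2*π) :=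
    ((hg.mul (convK_cont hf)).intervalIntegrable _ _).const_mul _
  have i4 : IntervalIntegrable (fun s => b^2 * (g s * convK g s)) volume 0 (2*π) :=
    ((hg.mul (convK_cont hg)).intervalIntegrable _ _).const_mul _
  rw [intervalIntegral.integral_add (i1.add i2) (i3.add i4),
    intervalIntegral.integral_add i1 i2, intervalIntegral.integral_add i3 i4,
    intervalIntegral.integral_const_mul, intervalIntegral.integral_const_mul,
    intervalIntegral.integral_const_mul, intervalIntegral.integral_const_mul]
  ring

section bvv
variable {α β : ℝ} (hβ : 0 < β) (hβα : β ≤ α)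

include hβ hβα in
lemma Bvv_val : brk (vv α β) (vv α β)
    = (∫ s in (0:ℝ)..(2*π), (uu α β s)^2) / (α^2 * β^2) := by
  have hα : (0:ℝ) < α := lt_of_lt_of_le hβ hβα
  have hvvper : Function.Periodic (vv α β) (2*π) := fun x => vv_per2 x
  unfold brk convK
  have h1 : (∫ s in (0:ℝ)..(2*π),
      vv α β s * ∫ t in (0:ℝ)..(2*π), (1/4) * |Real.sin (s - t)| * vv α β t)
      = ∫ s in (0:ℝ)..(2*π), (uu α β s)^2 / (α^2 * β^2) := by
    apply intervalIntegral.integral_congr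
    intro s _
    simp only []
    rw [fold (vv α β) (vv_cont hβ hβα) hvvper s, conv_vv hβ hβα s]
    have he := (ell_pos hβ hβα s).ne'
    rw [vv, uu]
    field_simp
  rw [h1, intervalIntegral.integral_div]
end bvv
/-- The elliptic-integral identity `α² I₁ = β² I₂` for the convolution integrals
built from the constraint matrix entries of an elliptical orbit. -/
theorem elliptic_integral_identity
    (α β : ℝ) (hβ : 0 < β) (hαβ : β < α)
    (Φ A11 A12 A22 : ℝ → ℝ) (I1 I2 : ℝ)
    (hΦ : Φ = fun s => Real.sqrt (α ^ 2 * cos s ^ 2 + β ^ 2 * sin s ^ 2))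
    (hA11 : A11 = fun s => β ^ 2 * sin s ^ 2 / (Φ s) ^ 3)
    (hA12 : A12 = fun s => -(α * β * cos s * sin s) / (Φ s) ^ 3)
    (hA22 : A22 = fun s => α ^ 2 * cos s ^ 2 / (Φ s) ^ 3)
    (hI1 : I1 =
      (∫ s in (0:ℝ)..(2 * π), A11 s * ∫ t in (0:ℝ)..(2 * π), (1/4) * |sin (s - t)| * A11 t)
      + ∫ s in (0:ℝ)..(2 * π), A12 s * ∫ t in (0:ℝ)..(2 * π), (1/4) * |sin (s - t)| * A12 t)
    (hI2 : I2 =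
      (∫ s in (0:ℝ)..(2 * π), A22 s * ∫ t in (0:ℝ)..(2 * π), (1/4) * |sin (s - t)| * A22 t)
      + ∫ s in (0:ℝ)..(2 * π), A12 s * ∫ t in (0:ℝ)..(2 * π), (1/4) * |sin (s - t)| * A12 t) :
    α ^ 2 * I1 = β ^ 2 * I2 := by
  have hβα : β ≤ α := hαβ.le
  have hα : (0:ℝ) < α := hβ.trans hαβ
  have hne : α^2 - β^2 ≠ 0 := by nlinarith
  have hcu := uu_cont hβ hβα
  have hcv := vv_cont hβ hβα
  have hcp := pp_cont hβ hβα
  have hell : ∀ t : ℝ, Real.sqrt (α ^ 2 * cos t ^ 2 + β ^ 2 * sin t ^ 2) = ell α β t :=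
    fun t => rfl
  have hA11c : A11 = fun t => (α^2*β^2/(α^2-β^2)) * vv α β t
      + (-(β^2/(α^2-β^2))) * uu α β t := by
    rw [hA11, hΦ]; funext t; simp only [hell]
    have he := (ell_pos hβ hβα t).ne'
    have hsq := ell_sq (α := α) (β := β) t
    have hp := Real.sin_sq_add_cos_sq t
    rw [vv, uu]
    have hkey : α^2*β^2 - β^2 * ell α β t^2 = (α^2-β^2) * (β^2 * Real.sin t^2) := by
      linear_combination (-(β^2)) * hsq + (-(α^2*β^2)) * hp
    have hcomb : (α^2*β^2/(α^2-β^2)) * ((ell α β t ^3)⁻¹) + (-(β^2/(α^2-β^2))) * (ell α β t)⁻¹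
        = (α^2*β^2 - β^2 * ell α β t^2)/((α^2-β^2) * ell α β t^3) := by
      field_simp
      ring
    rw [hcomb, hkey, mul_div_mul_left _ _ hne]
  have hA22c : A22 = fun t => (-(α^2*β^2/(α^2-β^2))) * vv α β t
      + (α^2/(α^2-β^2)) * uu α β t := by
    rw [hA22, hΦ]; funext t; simp only [hell]
    have he := (ell_pos hβ hβα t).ne'
    have hsq := ell_sq (α := α) (β := β) t
    have hp := Real.sin_sq_add_cos_sq t
    rw [vv, uu]
    have hkey : -(α^2*β^2) + α^2 * ell α β t^2 = (α^2-β^2) * (α^2 * Real.cos t^2) := by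
      linear_combination (α^2) * hsq + (α^2*β^2) * hp
    have hcomb : (-(α^2*β^2/(α^2-β^2))) * ((ell α β t ^3)⁻¹) + (α^2/(α^2-β^2)) * (ell α β t)⁻¹
        = (-(α^2*β^2) + α^2 * ell α β t^2)/((α^2-β^2) * ell α β t^3) := by
      field_simp
    rw [hcomb, hkey, mul_div_mul_left _ _ hne]
  have hA12c : A12 = fun t => (-(α*β/(α^2-β^2))) * pp α β t + 0 * pp α β t := by
    rw [hA12, hΦ]; funext t; simp only [hell]
    have he := (ell_pos hβ hβα t).ne'
    rw [pp, vv]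
    field_simp
    ring
  have hI1' : I1 = brk A11 A11 + brk A12 A12 := hI1
  have hI2' : I2 = brk A22 A22 + brk A12 A12 := hI2
  rw [hI1', hI2', hA11c, hA22c, hA12c, brk_comb hcv hcu, brk_comb hcv hcu, brk_comb hcp hcp]
  have hv := Bvv_val hβ hβα
  have hup : brk (uu α β) (uu α β) - brk (pp α β) (pp α β)
      = ∫ s in (0:ℝ)..(2*π), (uu α β s)^2 := Buu_sub_Bpp hβ hβα
  have hX : brk (uu α β) (uu α β)
      = brk (pp α β) (pp α β) + ∫ s in (0:ℝ)..(2*π), (uu α β s)^2 := by linarith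
  rw [hv, hX]
  field_simp
  ring
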